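/- In the poset (set partitions of [n], ≤_*), the number of elements covered by a set partition A equals n - ℓ(A). -/

import Mathlib

open scoped Classical
noncomputable section

/-- The ground set `[n] = {1, …, n}`. -/
def ground (n : ℕ) : Finset ℕ := Finset.Icc 1 n

/-- `A` is a set partition of `[n]`. -/
def IsSetPartition (n : ℕ) (A : Finset (Finset ℕ)) : Prop :=
  (∀ B ∈ A, B.Nonempty) ∧
  (∀ B ∈ A, ∀ C ∈ A, B ≠ C → Disjoint B C) ∧
  A.sup id = ground n

/-- Shift every entry of every part by `n`. -/
def shiftP (n : ℕ) (A : Finset (Finset ℕ)) : Finset (Finset ℕ) :=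
  A.image (fun B => B.image (· + n))

/-- Shifted concatenation `A|B` of a set partition `A ⊢ [n]` with `B`. -/
def concatP (n : ℕ) (A B : Finset (Finset ℕ)) : Finset (Finset ℕ) :=
  A ∪ shiftP n B

/-- `A` is an atomic set partition of `[n]`: nonempty and not a nontrivial
shifted concatenation. -/
def AtomicP (n : ℕ) (A : Finset (Finset ℕ)) : Prop :=
  IsSetPartition n A ∧ 0 < n ∧
  ¬ ∃ k B C, 0 < k ∧ k < n ∧ IsSetPartition k B ∧ IsSetPartition (n - k) C ∧
      A = concatP k B C

/-- Shifted concatenation of a list of (size, set partition) pairs. -/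
def concatListP : List (ℕ × Finset (Finset ℕ)) → ℕ × Finset (Finset ℕ)
  | [] => (0, ∅)
  | p :: L => ((concatListP L).1 + p.1, concatP p.1 p.2 (concatListP L).2)

/-- `L` is the atomic factorization `A^!` of the set partition `A ⊢ [n]`. -/
def AtomicFactorization (n : ℕ) (A : Finset (Finset ℕ))
    (L : List (ℕ × Finset (Finset ℕ))) : Prop :=
  (∀ p ∈ L, AtomicP p.1 p.2) ∧ concatListP L = (n, A)

/-- The Bell number: the number of set partitions of `[n]`. -/
def bell (n : ℕ) : ℕ := Nat.card {A : Finset (Finset ℕ) // IsSetPartition n A}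

/-- Stirling numbers of the second kind: set partitions of `[n]` into `k` parts. -/
def stirling2 (n k : ℕ) : ℕ :=
  Nat.card {A : Finset (Finset ℕ) // IsSetPartition n A ∧ A.card = k}

/-- The number of atomic set partitions of `[n]` into `k` parts. -/
def atomCount (n k : ℕ) : ℕ :=
  Nat.card {A : Finset (Finset ℕ) // AtomicP n A ∧ A.card = k}

/-- The number of atomic set partitions of `[n]`. -/
def atomCount' (n : ℕ) : ℕ := Nat.card {A : Finset (Finset ℕ) // AtomicP n A}

/-- Refinement order: `A ≤ B` iff every part of `A` is contained in a part of `B`. -/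
def refines (A B : Finset (Finset ℕ)) : Prop := ∀ a ∈ A, ∃ b ∈ B, a ⊆ b

/-- The meet `A ∧ B` of two set partitions. -/
def meetP (A B : Finset (Finset ℕ)) : Finset (Finset ℕ) :=
  ((A ×ˢ B).image fun p => p.1 ∩ p.2).filter (·.Nonempty)

/-- The set partition `{[n]}` with a single part (empty if `n = 0`). -/
def onePartP (n : ℕ) : Finset (Finset ℕ) := if n = 0 then ∅ else {ground n}

/-- The finite set of set partitions of `[n]` satisfying a predicate `P`. -/
def SPs (n : ℕ) (P : Finset (Finset ℕ) → Prop) : Finset (Finset (Finset ℕ)) :=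
  (ground n).powerset.powerset.filter fun A => IsSetPartition n A ∧ P A

/-- Covering relation for `≤_*`: `B` covers `A` if `B` is obtained from `A` by merging two
parts `a, a'` with every element of `a` smaller than every element of `a'`. -/
def coverStar (A B : Finset (Finset ℕ)) : Prop :=
  ∃ a ∈ A, ∃ a' ∈ A, a ≠ a' ∧ (∀ x ∈ a, ∀ y ∈ a', x < y) ∧
    B = insert (a ∪ a') ((A.erase a).erase a')

/-- The order `≤_*` on set partitions. -/
def leStar : Finset (Finset ℕ) → Finset (Finset ℕ) → Prop :=
  Relation.ReflTransGen coverStar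

/-- Restriction `A↓_S` of a set partition to the entries in `S`. -/
def restrictP (A : Finset (Finset ℕ)) (S : Finset ℕ) : Finset (Finset ℕ) :=
  (A.image (· ∩ S)).filter (·.Nonempty)

/-- The standardization map of a finite set `S`: sends the `i`-th smallest element of `S`
to `i` (1-indexed). -/
def stMap (S : Finset ℕ) (x : ℕ) : ℕ := (S.filter (· ≤ x)).card

/-- Standardization of a set partition: relabel its entries to `{1,…,m}` preserving order. -/
def stdP (A : Finset (Finset ℕ)) : Finset (Finset ℕ) :=
  A.image fun b => b.image (stMap (A.sup id))

/-- The map raising `{1,…,|S|}` order-preservingly onto `S`. -/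
def raiseMap (S : Finset ℕ) (x : ℕ) : ℕ := (S.sort (· ≤ ·)).getD (x - 1) 0

/-- `A↑_S`: raise the entries of `A` order-preservingly so the ground set becomes `S`. -/
def raiseP (S : Finset ℕ) (A : Finset (Finset ℕ)) : Finset (Finset ℕ) :=
  A.image fun b => b.image (raiseMap S)

/-- `IsShuffle l₁ l₂ l`: `l` is a shuffle (interleaving) of `l₁` and `l₂`. -/
inductive IsShuffle {α : Type*} : List α → List α → List α → Prop
  | nil : IsShuffle [] [] []
  | left {a : α} {l₁ l₂ l : List α} : IsShuffle l₁ l₂ l → IsShuffle (a :: l₁) l₂ (a :: l)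
  | right {a : α} {l₁ l₂ l : List α} : IsShuffle l₁ l₂ l → IsShuffle l₁ (a :: l₂) (a :: l)

/-- A word is Lyndon if it is nonempty and lexicographically strictly smaller than all of
its proper cyclic rotations. -/
def LyndonWord {α : Type*} (lt : α → α → Prop) (w : List α) : Prop :=
  w ≠ [] ∧ ∀ i, 0 < i → i < w.length → List.Lex lt w (w.rotate i)

/-- A set partition is Lyndon (with respect to a total order `lt` on atomic set partitions)
if its atomic factorization is a Lyndon word. -/
def LyndonPartition (lt : ℕ × Finset (Finset ℕ) → ℕ × Finset (Finset ℕ) → Prop)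
    (n : ℕ) (A : Finset (Finset ℕ)) : Prop :=
  ∃ L, AtomicFactorization n A L ∧ LyndonWord lt L

/-! ### Set compositions -/

/-- `Φ` is a set composition of `[n]`: an ordered sequence of nonempty pairwise disjoint
sets whose union is `[n]`. -/
def IsSetComposition (n : ℕ) (Φ : List (Finset ℕ)) : Prop :=
  (∀ B ∈ Φ, B.Nonempty) ∧ Φ.Pairwise Disjoint ∧ Φ.foldr (· ∪ ·) ∅ = ground n

/-- Shift every entry of every part of a set composition by `n`. -/
def shiftC (n : ℕ) (Φ : List (Finset ℕ)) : List (Finset ℕ) :=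
  Φ.map (·.image (· + n))

/-- Shifted concatenation `Φ|Ψ` of set compositions, `Φ ⊨ [n]`. -/
def concatC (n : ℕ) (Φ Ψ : List (Finset ℕ)) : List (Finset ℕ) := Φ ++ shiftC n Ψ

/-- An atomic set composition: nonempty and not a nontrivial shifted concatenation. -/
def AtomicC (n : ℕ) (Φ : List (Finset ℕ)) : Prop :=
  IsSetComposition n Φ ∧ 0 < n ∧
  ¬ ∃ k Ψ Γ, 0 < k ∧ k < n ∧ IsSetComposition k Ψ ∧ IsSetComposition (n - k) Γ ∧
      Φ = concatC k Ψ Γ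

/-- Shifted concatenation of a list of (size, set composition) pairs. -/
def concatListC : List (ℕ × List (Finset ℕ)) → ℕ × List (Finset ℕ)
  | [] => (0, [])
  | p :: L => ((concatListC L).1 + p.1, concatC p.1 p.2 (concatListC L).2)

/-- `L` is the atomic factorization `Φ^!` of the set composition `Φ ⊨ [n]`. -/
def AtomicFactorizationC (n : ℕ) (Φ : List (Finset ℕ))
    (L : List (ℕ × List (Finset ℕ))) : Prop :=
  (∀ p ∈ L, AtomicC p.1 p.2) ∧ concatListC L = (n, Φ)

/-- Covering relation for `≤_*` on set compositions: merge two adjacent parts `a, b` with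
every element of `a` smaller than every element of `b`. -/
def coverStarC (Φ Ψ : List (Finset ℕ)) : Prop :=
  ∃ L₁ a b L₂, Φ = L₁ ++ a :: b :: L₂ ∧ (∀ x ∈ a, ∀ y ∈ b, x < y) ∧
    Ψ = L₁ ++ (a ∪ b) :: L₂

/-- The order `≤_*` on set compositions. -/
def leStarC : List (Finset ℕ) → List (Finset ℕ) → Prop :=
  Relation.ReflTransGen coverStarC

/-- The meet operation `Φ ∧ Ψ` on set compositions: the nonempty intersections
`Φ_i ∩ Ψ_j` in lexicographic order of `(i, j)`. -/
def meetC (Φ Ψ : List (Finset ℕ)) : List (Finset ℕ) :=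
  (Φ.flatMap fun a => Ψ.map fun b => a ∩ b).filter (·.Nonempty)

/-- The one-part set composition `([n])` (empty if `n = 0`). -/
def onePartC (n : ℕ) : List (Finset ℕ) := if n = 0 then [] else [ground n]

/-- Lists of length `k` with all entries in `s`. -/
def listsOfLen (s : Finset (Finset ℕ)) : ℕ → Finset (List (Finset ℕ))
  | 0 => {[]}
  | k + 1 => (s ×ˢ listsOfLen s k).image fun p => p.1 :: p.2

/-- The finite set of set compositions of `[n]` satisfying a predicate `P`. -/
def SCs (n : ℕ) (P : List (Finset ℕ) → Prop) : Finset (List (Finset ℕ)) :=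
  ((Finset.range (n + 1)).biUnion fun k => listsOfLen (ground n).powerset k).filter
    fun Φ => IsSetComposition n Φ ∧ P Φ

/-- `Φ↑_S`: raise the entries of a set composition order-preservingly into `S`. -/
def raiseC (S : Finset ℕ) (Φ : List (Finset ℕ)) : List (Finset ℕ) :=
  Φ.map (·.image (raiseMap S))

/-- Standardization of a set composition. -/
def stdC (Φ : List (Finset ℕ)) : List (Finset ℕ) :=
  Φ.map (·.image (stMap (Φ.foldr (· ∪ ·) ∅)))

/-- `α(Φ)`: the composition of part sizes of `Φ`. -/
def alphaC (Φ : List (Finset ℕ)) : List ℕ := Φ.map Finset.card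

/-- The order `≤_#` on set compositions: `Φ ≤_# Ψ` iff `α(Φ) = α(Ψ)` and each atomic factor
of `Φ` is the standardization of the corresponding consecutive block of parts of `Ψ`. -/
def leSharp (Φ Ψ : List (Finset ℕ)) : Prop :=
  alphaC Φ = alphaC Ψ ∧
  ∃ (L : List (ℕ × List (Finset ℕ))) (Bs : List (List (Finset ℕ))),
    (∀ p ∈ L, AtomicC p.1 p.2) ∧ (concatListC L).2 = Φ ∧
    Ψ = Bs.flatten ∧ List.Forall₂ (fun b (l : ℕ × List (Finset ℕ)) => stdC b = l.2) Bs L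

/-! ### Index types -/

/-- Set partitions with their sizes. -/
abbrev SPIdx := {x : ℕ × Finset (Finset ℕ) // IsSetPartition x.1 x.2}

/-- Atomic set partitions with their sizes. -/
abbrev AtomIdx := {x : ℕ × Finset (Finset ℕ) // AtomicP x.1 x.2}

/-- Set compositions with their sizes. -/
abbrev SCIdx := {x : ℕ × List (Finset ℕ) // IsSetComposition x.1 x.2}

/-- Atomic set compositions with their sizes. -/
abbrev AtomCIdx := {x : ℕ × List (Finset ℕ) // AtomicC x.1 x.2}

/-! ### Auxiliary material for STATEMENT 10 -/

lemma le_sup_nat {a : Finset ℕ} {x : ℕ} (h : x ∈ a) : x ≤ a.sup id :=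
  Finset.le_sup (f := id) h

lemma sup_mem_nat (a : Finset ℕ) (h : a.Nonempty) : a.sup id ∈ a := by
  rw [← Finset.sup'_eq_sup h]
  exact Finset.sup'_mem _ (fun x hx y hy => by rcases le_total x y with hxy | hxy; exacts [(max_eq_right hxy).symm ▸ hy, (max_eq_left hxy).symm ▸ hx]) _ h _
    (fun b hb => hb)

/-- Index set of splits of a partition. -/
def splitS (A : Finset (Finset ℕ)) : Finset (Finset ℕ × ℕ) :=
  A.biUnion fun a => (a.erase (a.sup id)).image fun t => (a, t)

/-- The partition obtained from `A` by splitting part `p.1` at value `p.2`. -/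
def splitG (A : Finset (Finset ℕ)) (p : Finset ℕ × ℕ) : Finset (Finset ℕ) :=
  insert (p.1.filter (· ≤ p.2)) (insert (p.1.filter (p.2 < ·)) (A.erase p.1))

lemma mem_splitS {A : Finset (Finset ℕ)} {p : Finset ℕ × ℕ} :
    p ∈ splitS A ↔ p.1 ∈ A ∧ p.2 ∈ p.1 ∧ p.2 ≠ p.1.sup id := by
  simp only [splitS, Finset.mem_biUnion, Finset.mem_image, Finset.mem_erase]
  constructor
  · rintro ⟨a, ha, t, ⟨htne, hta⟩, rfl⟩; exact ⟨ha, hta, htne⟩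
  · rintro ⟨h1, h2, h3⟩; exact ⟨p.1, h1, p.2, ⟨h3, h2⟩, rfl⟩

/-- in the poset `(set partitions of [n], ≤_*)`, the number of elements
covered by a set partition `A` is `n - ℓ(A)`. -/
theorem card_covered_starOrder (n : ℕ) (A : Finset (Finset ℕ)) (hA : IsSetPartition n A) :
    Nat.card {C : Finset (Finset ℕ) // IsSetPartition n C ∧ coverStar C A} = n - A.card := by
  classical
  obtain ⟨hne, hdisj, hsup⟩ := hA
  -- basic facts about splits
  have hbasic : ∀ a ∈ A, ∀ t ∈ a, t ≠ a.sup id →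
      t ∈ a.filter (· ≤ t) ∧ a.sup id ∈ a.filter (t < ·) ∧
      a.filter (· ≤ t) ∪ a.filter (t < ·) = a ∧ Disjoint (a.filter (· ≤ t)) (a.filter (t < ·)) := by
    intro a ha t ht htne
    have hts : t < a.sup id := lt_of_le_of_ne (le_sup_nat ht) htne
    refine ⟨Finset.mem_filter.2 ⟨ht, le_refl t⟩,
      Finset.mem_filter.2 ⟨sup_mem_nat a ⟨t, ht⟩, hts⟩, ?_, ?_⟩
    · ext x
      simp only [Finset.mem_union, Finset.mem_filter]
      constructor
      · rintro (⟨h, _⟩ | ⟨h, _⟩) <;> exact h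
      · intro hx; rcases le_or_gt x t with h | h
        · exact Or.inl ⟨hx, h⟩
        · exact Or.inr ⟨hx, h⟩
    · rw [Finset.disjoint_left]
      intro x hx hx'
      simp only [Finset.mem_filter] at hx hx'
      omega
  -- a proper piece of a part is not another part
  have hsub_ne : ∀ a ∈ A, ∀ s : Finset ℕ, s ⊆ a → s.Nonempty → ∀ b ∈ A.erase a, s ≠ b := by
    intro a ha s hsa hsne b hb heq
    obtain ⟨hba, hbA⟩ := Finset.mem_erase.1 hb
    have hd : Disjoint b a := hdisj b hbA a ha hba
    obtain ⟨x, hx⟩ := hsne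
    exact Finset.disjoint_left.1 hd (heq ▸ hx) (hsa hx)
  -- the image partitions are covered by A
  have hP : ∀ p ∈ splitS A, IsSetPartition n (splitG A p) ∧ coverStar (splitG A p) A := by
    rintro ⟨a, t⟩ hp
    obtain ⟨ha, ht, htne⟩ := mem_splitS.1 hp
    obtain ⟨htc, hsupc', hunion, hdcc'⟩ := hbasic a ha t ht htne
    have hts : t < a.sup id := lt_of_le_of_ne (le_sup_nat ht) htne
    set c := a.filter (· ≤ t) with hc
    set c' := a.filter (t < ·) with hc'
    have hcne : c ≠ c' := by
      intro h
      have := h ▸ htc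
      simp only [hc', Finset.mem_filter] at this
      omega
    have hcnea : ∀ b ∈ A.erase a, c ≠ b := fun b hb =>
      hsub_ne a ha c (Finset.filter_subset _ _) ⟨t, htc⟩ b hb
    have hc'nea : ∀ b ∈ A.erase a, c' ≠ b := fun b hb =>
      hsub_ne a ha c' (Finset.filter_subset _ _) ⟨_, hsupc'⟩ b hb
    have hAeq : A = insert a (A.erase a) := (Finset.insert_erase ha).symm
    have hdc : ∀ D ∈ A.erase a, Disjoint c D ∧ Disjoint c' D := by
      intro D hD
      obtain ⟨hDa, hDA⟩ := Finset.mem_erase.1 hD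
      have h1 : Disjoint a D := hdisj a ha D hDA (Ne.symm hDa)
      exact ⟨Finset.disjoint_of_subset_left (Finset.filter_subset _ _) h1,
        Finset.disjoint_of_subset_left (Finset.filter_subset _ _) h1⟩
    have herase1 : (splitG A (a, t)).erase c = insert c' (A.erase a) := by
      apply Finset.erase_insert
      simp only [Finset.mem_insert, not_or]
      exact ⟨hcne, fun h => hcnea _ h rfl⟩
    have herase2 : (insert c' (A.erase a)).erase c' = A.erase a := by
      apply Finset.erase_insert
      intro h
      exact hc'nea _ h rfl
    constructor
    · refine ⟨?_, ?_, ?_⟩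
      · intro B hB
        simp only [splitG, Finset.mem_insert] at hB
        rcases hB with rfl | rfl | hB
        · exact ⟨t, htc⟩
        · exact ⟨_, hsupc'⟩
        · exact hne B (Finset.mem_of_mem_erase hB)
      · intro B hB C hC hBC
        simp only [splitG, Finset.mem_insert] at hB hC
        rcases hB with rfl | rfl | hB <;> rcases hC with rfl | rfl | hC
        · exact absurd rfl hBC
        · exact hdcc'
        · exact (hdc _ hC).1
        · exact hdcc'.symm
        · exact absurd rfl hBC
        · exact (hdc _ hC).2
        · exact ((hdc _ hB).1).symm
        · exact ((hdc _ hB).2).symm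
        · exact hdisj _ (Finset.mem_of_mem_erase hB) _ (Finset.mem_of_mem_erase hC) hBC
      · have hsup' : (splitG A (a, t)).sup id = A.sup id := by
          conv_rhs => rw [hAeq]
          simp only [splitG, Finset.sup_insert, id_eq]
          rw [← sup_assoc]; exact congrArg (· ⊔ _) hunion
        rw [hsup', hsup]
    · refine ⟨c, Finset.mem_insert_self _ _, c',
        Finset.mem_insert_of_mem (Finset.mem_insert_self _ _), hcne, ?_, ?_⟩
      · intro x hx y hy
        simp only [hc, hc', Finset.mem_filter] at hx hy
        omega
      · rw [herase1, herase2, hunion]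
        exact hAeq
  -- surjectivity
  have hsurj : ∀ C, IsSetPartition n C → coverStar C A → ∃ p ∈ splitS A, splitG A p = C := by
    rintro C ⟨Cne, Cdisj, _⟩ ⟨c, hc, c', hc', hcc', hlt, hAeq⟩
    have hcne : c.Nonempty := Cne c hc
    have hc'ne : c'.Nonempty := Cne c' hc'
    set a := c ∪ c' with ha
    set t := c.sup id with htdef
    have htc : t ∈ c := sup_mem_nat c hcne
    have hta : t ∈ a := Finset.mem_union_left _ htc
    have hane : a.Nonempty := ⟨t, hta⟩
    have hsupc' : a.sup id ∈ c' := by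
      have hmem : a.sup id ∈ a := sup_mem_nat a hane
      rcases Finset.mem_union.1 hmem with h | h
      · obtain ⟨y, hy⟩ := hc'ne
        have h1 : a.sup id < y := hlt _ h _ hy
        have h2 : y ≤ a.sup id := le_sup_nat (Finset.mem_union_right _ hy)
        omega
      · exact h
    have htsup : t ≠ a.sup id := by
      intro h
      have := hlt t htc _ hsupc'
      omega
    have haA : a ∈ A := hAeq ▸ Finset.mem_insert_self _ _
    refine ⟨(a, t), mem_splitS.2 ⟨haA, hta, htsup⟩, ?_⟩
    have hcfilter : a.filter (· ≤ t) = c := by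
      ext x
      simp only [Finset.mem_filter, ha, Finset.mem_union]
      constructor
      · rintro ⟨h1 | h1, h2⟩
        · exact h1
        · exact absurd (hlt t htc x h1) (by omega)
      · intro hx
        exact ⟨Or.inl hx, le_sup_nat hx⟩
    have hc'filter : a.filter (t < ·) = c' := by
      ext x
      simp only [Finset.mem_filter, ha, Finset.mem_union]
      constructor
      · rintro ⟨h1 | h1, h2⟩
        · have := le_sup_nat h1
          omega
        · exact h1
      · intro hx
        exact ⟨Or.inr hx, hlt t htc x hx⟩
    have hnotin : a ∉ (C.erase c).erase c' := by
      intro hmem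
      obtain ⟨h1, h2⟩ := Finset.mem_erase.1 hmem
      obtain ⟨h3, h4⟩ := Finset.mem_erase.1 h2
      have hd : Disjoint a c := Cdisj a h4 c hc h3
      exact Finset.disjoint_left.1 hd hta htc
    have herase : A.erase a = (C.erase c).erase c' := by
      rw [hAeq]
      exact Finset.erase_insert hnotin
    have hc'mem : c' ∈ C.erase c := Finset.mem_erase.2 ⟨Ne.symm hcc', hc'⟩
    simp only [splitG]
    rw [hcfilter, hc'filter, herase, Finset.insert_erase hc'mem, Finset.insert_erase hc]
  -- injectivity on splitS A
  have hinj : Set.InjOn (splitG A) ↑(splitS A) := by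
    rintro ⟨a, t⟩ hp ⟨b, s⟩ hq heq
    rw [Finset.mem_coe] at hp hq
    obtain ⟨haA, hta, htne⟩ := mem_splitS.1 hp
    obtain ⟨hbA, hsb, hsne⟩ := mem_splitS.1 hq
    have hts : t < a.sup id := lt_of_le_of_ne (le_sup_nat hta) htne
    have hss : s < b.sup id := lt_of_le_of_ne (le_sup_nat hsb) hsne
    -- b is not a part of splitG A (b, s)
    have hb_not : b ∉ splitG A (b, s) := by
      simp only [splitG, Finset.mem_insert, Finset.mem_erase, not_or]
      refine ⟨?_, ?_, fun h => h.1 rfl⟩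
      · intro h
        have : b.sup id ∈ b.filter (· ≤ s) := h ▸ sup_mem_nat b ⟨s, hsb⟩
        simp only [Finset.mem_filter] at this
        omega
      · intro h
        have : s ∈ b.filter (s < ·) := h ▸ hsb
        simp only [Finset.mem_filter] at this
        omega
    have hab : a = b := by
      by_contra hab
      have hbmem : b ∈ splitG A (a, t) := by
        simp only [splitG]
        exact Finset.mem_insert_of_mem (Finset.mem_insert_of_mem
          (Finset.mem_erase.2 ⟨fun h => hab h.symm, hbA⟩))
      rw [heq] at hbmem
      exact hb_not hbmem
    subst hab
    -- now show t = s
    have hts' : ∀ u v : ℕ, u ∈ a → a.filter (· ≤ u) = a.filter (v < ·) → v < u := by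
      intro u v hu h
      have : u ∈ a.filter (v < ·) := h ▸ Finset.mem_filter.2 ⟨hu, le_refl u⟩
      simp only [Finset.mem_filter] at this
      omega
    have hmemc : a.filter (· ≤ t) ∈ splitG A (a, s) := by
      rw [← heq]
      exact Finset.mem_insert_self _ _
    have heqfilter : ∀ u v : ℕ, u ∈ a → a.filter (· ≤ u) = a.filter (· ≤ v) → u ≤ v := by
      intro u v hu h
      have : u ∈ a.filter (· ≤ v) := h ▸ Finset.mem_filter.2 ⟨hu, le_refl u⟩
      simp only [Finset.mem_filter] at this
      exact this.2
    have hnotinA : ∀ u : ℕ, u ∈ a → a.filter (· ≤ u) ∉ A.erase a := by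
      intro u hu hmem
      refine hsub_ne a haA _ (fun x hx => (Finset.mem_filter.1 hx).1)
        (⟨u, Finset.mem_filter.2 ⟨hu, le_refl u⟩⟩ : (a.filter (· ≤ u)).Nonempty) _ hmem rfl
    simp only [splitG, Finset.mem_insert] at hmemc
    have hteqs : t = s := by
      rcases hmemc with h | h | h
      · exact le_antisymm (heqfilter t s hta h) (heqfilter s t hsb h.symm)
      · -- filter ≤ t = filter (s < ·); derive symmetric fact and contradiction
        have h1 : s < t := hts' t s hta h
        have hmemc2 : a.filter (· ≤ s) ∈ splitG A (a, t) := by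
          rw [heq]
          exact Finset.mem_insert_self _ _
        simp only [splitG, Finset.mem_insert] at hmemc2
        rcases hmemc2 with h2 | h2 | h2
        · exact (le_antisymm (heqfilter s t hsb h2) (heqfilter t s hta h2.symm)).symm
        · have h3 : t < s := hts' s t hsb h2
          omega
        · exact absurd h2 (hnotinA s hsb)
      · exact absurd h (hnotinA t hta)
    rw [hteqs]
  -- counting the index set
  have hcard : (splitS A).card = n - A.card := by
    have h1 : (splitS A).card = ∑ a ∈ A, (a.card - 1) := by
      rw [splitS, Finset.card_biUnion]
      · refine Finset.sum_congr rfl fun a ha => ?_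
        rw [Finset.card_image_of_injective _ (fun x y h => by simpa using h),
          Finset.card_erase_of_mem (sup_mem_nat a (hne a ha))]
      · intro x hx y hy hxy
        rw [Function.onFun, Finset.disjoint_left]
        rintro p hp hq
        simp only [Finset.mem_image] at hp hq
        obtain ⟨t, _, rfl⟩ := hp
        obtain ⟨t', _, h⟩ := hq
        exact hxy (by simpa using congrArg Prod.fst h.symm)
    have h2 : ∑ a ∈ A, a.card = n := by
      have hb : A.biUnion id = ground n := by
        rw [← Finset.sup_eq_biUnion]
        exact hsup
      have hcardb := Finset.card_biUnion (s := A) (t := id)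
        (fun x hx y hy hxy => hdisj x hx y hy hxy)
      rw [hb] at hcardb
      simp only [ground, Nat.card_Icc] at hcardb
      simp only [id_eq] at hcardb
      omega
    have h3 : ∑ a ∈ A, (a.card - 1) + A.card = ∑ a ∈ A, a.card := by
      rw [Finset.card_eq_sum_ones, ← Finset.sum_add_distrib]
      exact Finset.sum_congr rfl fun a ha =>
        Nat.sub_add_cancel (Finset.card_pos.2 (hne a ha))
    omega
  -- conclude
  have hsetEq : {C : Finset (Finset ℕ) | IsSetPartition n C ∧ coverStar C A}
      = ↑((splitS A).image (splitG A)) := by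
    ext C
    simp only [Set.mem_setOf_eq, Finset.coe_image, Set.mem_image, Finset.mem_coe]
    constructor
    · rintro ⟨h1, h2⟩
      obtain ⟨p, hp, hgp⟩ := hsurj C h1 h2
      exact ⟨p, hp, hgp⟩
    · rintro ⟨p, hp, rfl⟩
      exact hP p hp
  calc Nat.card {C : Finset (Finset ℕ) // IsSetPartition n C ∧ coverStar C A}
      = ({C : Finset (Finset ℕ) | IsSetPartition n C ∧ coverStar C A}).ncard :=
        Nat.card_coe_set_eq _
    _ = (↑((splitS A).image (splitG A)) : Set (Finset (Finset ℕ))).ncard := by rw [hsetEq]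
    _ = ((splitS A).image (splitG A)).card := Set.ncard_coe_finset _
    _ = (splitS A).card := Finset.card_image_of_injOn hinj
    _ = n - A.card := hcard

end
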